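/- Let T* ∈ (0,1), γ* ∈ (0,1), γ₃, γ₄ ∈ (0,1), and let k ∈ C^{γ₃}([0,T*]) and f ∈ C^{γ₄}([0,T*]). Set γ̄ = min{γ₃, γ₄}. Then for any λ ∈ (0,1) and every t ∈ [0,T*], |G_f(λt) − G_f(t)| ≤ (2 t^{γ̄} / (γ* Γ(1+x*))) · (⟨f⟩^{(γ₄)}_{[0,T*]} ‖k‖_{C([0,T*])} + |f(0)| ⟨k⟩^{(γ₃)}_{[0,T*]}). -/

import Mathlib

open Set MeasureTheory

/-- Hölder seminorm `⟨f⟩^{(α)}_{[0,T]}` of `f` on `[0,T]`. -/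
noncomputable def holderSemi (f : ℝ → ℝ) (T α : ℝ) : ℝ :=
  sSup {y : ℝ | ∃ s t : ℝ, 0 ≤ s ∧ s < t ∧ t ≤ T ∧ y = |f t - f s| / (t - s) ^ α}

/-- Sup norm `‖f‖_{C([0,T])}`. -/
noncomputable def supNorm (f : ℝ → ℝ) (T : ℝ) : ℝ :=
  sSup ((fun t => |f t|) '' Set.Icc 0 T)

/-- The minimum value of the Euler Gamma function on `(0, ∞)`, i.e. `Γ(1 + x*)`. -/
noncomputable def GammaMin : ℝ := sInf (Real.Gamma '' Set.Ioi (0 : ℝ))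

/-- `G_f(t) = ∫₀¹ (1-z)^{γ*-1} k(t - zt) f(zt) dz`. -/
noncomputable def Gbig (γs : ℝ) (k f : ℝ → ℝ) (t : ℝ) : ℝ :=
  ∫ z in (0:ℝ)..1, (1 - z) ^ (γs - 1) * k (t - z * t) * f (z * t)

/-- A crude lower bound for Γ on `[1, ∞)`. -/
lemma gamma_ge_of_one_le (x : ℝ) (hx : 1 ≤ x) : Real.exp (-2) ≤ Real.Gamma x := by
  have hx0 : (0:ℝ) < x := by linarith
  rw [Real.Gamma_eq_integral hx0]
  have hint : IntegrableOn (fun t => Real.exp (-t) * t ^ (x - 1)) (Ioi 0) :=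
    Real.GammaIntegral_convergent hx0
  have hsub : Icc (1:ℝ) 2 ⊆ Ioi 0 := fun y hy => lt_of_lt_of_le one_pos hy.1
  have h1 : ∫ t in Icc (1:ℝ) 2, Real.exp (-t) * t ^ (x - 1) ≤
      ∫ t in Ioi (0:ℝ), Real.exp (-t) * t ^ (x - 1) := by
    refine setIntegral_mono_set hint ?_ (HasSubset.Subset.eventuallyLE hsub)
    refine (ae_restrict_mem measurableSet_Ioi).mono fun t ht => ?_
    have : (0:ℝ) < t := ht
    positivity
  have h2 : Real.exp (-2) ≤ ∫ t in Icc (1:ℝ) 2, Real.exp (-t) * t ^ (x - 1) := by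
    have hconst : ∫ _ in Icc (1:ℝ) 2, Real.exp (-2) = Real.exp (-2) := by
      rw [setIntegral_const]
      rw [Real.volume_real_Icc]
      norm_num
    rw [← hconst]
    refine setIntegral_mono_on (integrableOn_const (hs := ?_))
      (hint.mono_set hsub) measurableSet_Icc (fun t ht => ?_)
    · rw [Real.volume_Icc]; exact ENNReal.ofReal_ne_top
    · have h1t : (1:ℝ) ≤ t := ht.1
      have ht2 : t ≤ 2 := ht.2
      have hexp : Real.exp (-2) ≤ Real.exp (-t) := Real.exp_le_exp.2 (by linarith)
      have hpow : (1:ℝ) ≤ t ^ (x - 1) := Real.one_le_rpow h1t (by linarith)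
      calc Real.exp (-2) = Real.exp (-2) * 1 := (mul_one _).symm
        _ ≤ Real.exp (-t) * t ^ (x - 1) :=
          mul_le_mul hexp hpow one_pos.le (Real.exp_pos _).le
  linarith

lemma gamma_ge (x : ℝ) (hx : 0 < x) : Real.exp (-2) ≤ Real.Gamma x := by
  rcases le_or_gt 1 x with h | h
  · exact gamma_ge_of_one_le x h
  · have h1 : Real.Gamma (x + 1) = x * Real.Gamma x := Real.Gamma_add_one hx.ne'
    have h2 := gamma_ge_of_one_le (x + 1) (by linarith)
    have hg : 0 < Real.Gamma x := Real.Gamma_pos_of_pos hx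
    nlinarith

lemma gammaMin_pos : 0 < GammaMin := by
  have h : Real.exp (-2) ≤ GammaMin := by
    refine le_csInf ⟨Real.Gamma 1, ⟨1, by norm_num, rfl⟩⟩ ?_
    rintro y ⟨x, hx, rfl⟩
    exact gamma_ge x hx
  linarith [Real.exp_pos (-2)]

lemma gammaMin_le_one : GammaMin ≤ 1 := by
  have h : GammaMin ≤ Real.Gamma 1 := by
    refine csInf_le ⟨0, ?_⟩ ⟨1, by norm_num, rfl⟩
    rintro y ⟨x, hx, rfl⟩
    exact (Real.Gamma_pos_of_pos hx).le
  simpa [Real.Gamma_one] using h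

lemma holderSemi_nonneg (g : ℝ → ℝ) (T α : ℝ) (hT : 0 < T)
    (hg : ∀ s t : ℝ, 0 ≤ s → s ≤ t → t ≤ T →
      |g t - g s| ≤ holderSemi g T α * (t - s) ^ α) :
    0 ≤ holderSemi g T α := by
  have hba : BddAbove {y : ℝ | ∃ s t : ℝ, 0 ≤ s ∧ s < t ∧ t ≤ T ∧
      y = |g t - g s| / (t - s) ^ α} := by
    refine ⟨holderSemi g T α, ?_⟩
    rintro y ⟨s, t, hs, hst, htT, rfl⟩
    have hpos : (0:ℝ) < (t - s) ^ α := Real.rpow_pos_of_pos (sub_pos.2 hst) _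
    rw [div_le_iff₀ hpos]
    exact hg s t hs hst.le htT
  have hmem : |g T - g 0| / (T - 0) ^ α ∈ {y : ℝ | ∃ s t : ℝ, 0 ≤ s ∧ s < t ∧ t ≤ T ∧
      y = |g t - g s| / (t - s) ^ α} := ⟨0, T, le_refl 0, hT, le_refl T, rfl⟩
  have h := le_csSup hba hmem
  have h0 : (0:ℝ) ≤ |g T - g 0| / (T - 0) ^ α :=
    div_nonneg (abs_nonneg _) (Real.rpow_nonneg (by linarith) _)
  exact le_trans h0 h

set_option maxHeartbeats 1000000 in
theorem stmt_16 (Ts γs γ₃ γ₄ : ℝ) (k f : ℝ → ℝ)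
    (hTs : Ts ∈ Set.Ioo (0:ℝ) 1) (hγs : γs ∈ Set.Ioo (0:ℝ) 1)
    (hγ₃ : γ₃ ∈ Set.Ioo (0:ℝ) 1) (hγ₄ : γ₄ ∈ Set.Ioo (0:ℝ) 1)
    (hkc : ContinuousOn k (Set.Icc 0 Ts))
    (hkh : ∀ s t : ℝ, 0 ≤ s → s ≤ t → t ≤ Ts →
      |k t - k s| ≤ holderSemi k Ts γ₃ * (t - s) ^ γ₃)
    (hfc : ContinuousOn f (Set.Icc 0 Ts))
    (hfh : ∀ s t : ℝ, 0 ≤ s → s ≤ t → t ≤ Ts →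
      |f t - f s| ≤ holderSemi f Ts γ₄ * (t - s) ^ γ₄) :
    ∀ lam ∈ Set.Ioo (0:ℝ) 1, ∀ t ∈ Set.Icc (0:ℝ) Ts,
      |Gbig γs k f (lam * t) - Gbig γs k f t| ≤
        2 * t ^ min γ₃ γ₄ / (γs * GammaMin) *
          (holderSemi f Ts γ₄ * supNorm k Ts + |f 0| * holderSemi k Ts γ₃) := by
  obtain ⟨hTs0, hTs1⟩ := hTs
  obtain ⟨hγs0, hγs1⟩ := hγs
  obtain ⟨hγ30, hγ31⟩ := hγ₃
  obtain ⟨hγ40, hγ41⟩ := hγ₄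
  intro lam hlam t ht
  obtain ⟨hl0, hl1⟩ := hlam
  obtain ⟨ht0, htT⟩ := ht
  set Hf := holderSemi f Ts γ₄ with hHf
  set Hk := holderSemi k Ts γ₃ with hHk
  set K := supNorm k Ts with hKdef
  have hHf0 : 0 ≤ Hf := holderSemi_nonneg f Ts γ₄ hTs0 hfh
  have hHk0 : 0 ≤ Hk := holderSemi_nonneg k Ts γ₃ hTs0 hkh
  -- sup norm facts
  have hKcomp : IsCompact ((fun x => |k x|) '' Set.Icc 0 Ts) :=
    isCompact_Icc.image_of_continuousOn hkc.abs
  have hKba : BddAbove ((fun x => |k x|) '' Set.Icc 0 Ts) := hKcomp.bddAbove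
  have hKb : ∀ x ∈ Set.Icc (0:ℝ) Ts, |k x| ≤ K :=
    fun x hx => le_csSup hKba ⟨x, hx, rfl⟩
  have hK0 : 0 ≤ K := le_trans (abs_nonneg _) (hKb 0 ⟨le_refl 0, hTs0.le⟩)
  have hS0 : 0 ≤ Hf * K + |f 0| * Hk :=
    add_nonneg (mul_nonneg hHf0 hK0) (mul_nonneg (abs_nonneg _) hHk0)
  rcases eq_or_lt_of_le ht0 with h0 | h0
  · rw [← h0]
    have hmin : min γ₃ γ₄ ≠ 0 := ne_of_gt (lt_min hγ30 hγ40)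
    simp [Real.zero_rpow hmin]
  -- now 0 < t
  have ht1 : t < 1 := lt_of_le_of_lt htT hTs1
  set m := min γ₃ γ₄ with hm
  set M : ℝ := 2 * (Hf * K) * t ^ γ₄ + |f 0| * (Hk * t ^ γ₃) with hM
  have hwint : IntervalIntegrable (fun z : ℝ => (1 - z) ^ (γs - 1)) volume 0 1 := by
    have h := (intervalIntegral.intervalIntegrable_rpow' (a := 0) (b := 1)
      (r := γs - 1) (by linarith)).comp_sub_left 1
    have h2 : IntervalIntegrable (fun x : ℝ => (1 - x) ^ (γs - 1)) volume 1 0 := by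
      simpa using h
    exact h2.symm
  -- integrability of the two integrands
  have hint : ∀ τ : ℝ, 0 ≤ τ → τ ≤ Ts →
      IntervalIntegrable (fun z => (1 - z) ^ (γs - 1) * k (τ - z * τ) * f (z * τ))
        volume 0 1 := by
    intro τ hτ0 hτT
    have hmap1 : ∀ z ∈ Set.uIcc (0:ℝ) 1, τ - z * τ ∈ Set.Icc (0:ℝ) Ts := by
      intro z hz
      rw [Set.uIcc_of_le (by norm_num : (0:ℝ) ≤ 1)] at hz
      obtain ⟨hz0, hz1⟩ := hz
      constructor
      · nlinarith
      · nlinarith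
    have hmap2 : ∀ z ∈ Set.uIcc (0:ℝ) 1, z * τ ∈ Set.Icc (0:ℝ) Ts := by
      intro z hz
      rw [Set.uIcc_of_le (by norm_num : (0:ℝ) ≤ 1)] at hz
      obtain ⟨hz0, hz1⟩ := hz
      constructor
      · positivity
      · nlinarith
    have hc : ContinuousOn (fun z : ℝ => k (τ - z * τ) * f (z * τ)) (Set.uIcc 0 1) := by
      refine ContinuousOn.mul ?_ ?_
      · exact hkc.comp ((continuous_const.sub (continuous_id.mul continuous_const)).continuousOn)
          hmap1
      · exact hfc.comp ((continuous_id.mul continuous_const).continuousOn) hmap2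
    have h := hwint.mul_continuousOn hc
    simpa only [← mul_assoc] using h
  -- pointwise inner estimate
  have inner : ∀ z : ℝ, 0 ≤ z → z ≤ 1 →
      |k (lam * t - z * (lam * t)) * f (z * (lam * t)) - k (t - z * t) * f (z * t)| ≤ M := by
    intro z hz0 hz1
    have hlt : 0 ≤ lam * t := by positivity
    have h1z : (0:ℝ) ≤ 1 - z := by linarith
    have h1l : (0:ℝ) ≤ 1 - lam := by linarith
    have ha10 : 0 ≤ lam * t - z * (lam * t) := by nlinarith [mul_nonneg h1z hlt]
    have ha12 : lam * t - z * (lam * t) ≤ t - z * t := by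
      nlinarith [mul_nonneg (mul_nonneg h1l h1z) h0.le]
    have ha20 : 0 ≤ t - z * t := by nlinarith [mul_nonneg h1z h0.le]
    have ha2T : t - z * t ≤ Ts := by nlinarith [mul_nonneg hz0 h0.le]
    have hd : (t - z * t) - (lam * t - z * (lam * t)) ≤ t := by
      nlinarith [mul_nonneg (mul_nonneg hz0 h0.le) h1l, hlt]
    have hb10 : 0 ≤ z * (lam * t) := mul_nonneg hz0 hlt
    have hb1t : z * (lam * t) ≤ t := by
      nlinarith [mul_nonneg h0.le (mul_nonneg hl0.le h1z), mul_nonneg h0.le h1l]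
    have hb20 : 0 ≤ z * t := mul_nonneg hz0 h0.le
    have hb2t : z * t ≤ t := by nlinarith [mul_nonneg h1z h0.le]
    have hka1 : |k (lam * t - z * (lam * t))| ≤ K :=
      hKb _ ⟨ha10, by linarith⟩
    have hka2 : |k (t - z * t)| ≤ K := hKb _ ⟨ha20, ha2T⟩
    have hfb1 : |f (z * (lam * t)) - f 0| ≤ Hf * t ^ γ₄ := by
      have h := hfh 0 (z * (lam * t)) le_rfl hb10 (by linarith)
      have hpow : (z * (lam * t) - 0) ^ γ₄ ≤ t ^ γ₄ :=
        Real.rpow_le_rpow (by linarith) (by linarith) hγ40.le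
      calc |f (z * (lam * t)) - f 0| ≤ Hf * (z * (lam * t) - 0) ^ γ₄ := h
        _ ≤ Hf * t ^ γ₄ := mul_le_mul_of_nonneg_left hpow hHf0
    have hfb2 : |f (z * t) - f 0| ≤ Hf * t ^ γ₄ := by
      have h := hfh 0 (z * t) le_rfl hb20 (by linarith)
      have hpow : (z * t - 0) ^ γ₄ ≤ t ^ γ₄ :=
        Real.rpow_le_rpow (by linarith) (by linarith) hγ40.le
      calc |f (z * t) - f 0| ≤ Hf * (z * t - 0) ^ γ₄ := h
        _ ≤ Hf * t ^ γ₄ := mul_le_mul_of_nonneg_left hpow hHf0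
    have hkd : |k (lam * t - z * (lam * t)) - k (t - z * t)| ≤ Hk * t ^ γ₃ := by
      have h := hkh (lam * t - z * (lam * t)) (t - z * t) ha10 ha12 ha2T
      have hpow : ((t - z * t) - (lam * t - z * (lam * t))) ^ γ₃ ≤ t ^ γ₃ :=
        Real.rpow_le_rpow (by linarith) hd hγ30.le
      calc |k (lam * t - z * (lam * t)) - k (t - z * t)|
          = |k (t - z * t) - k (lam * t - z * (lam * t))| := abs_sub_comm _ _
        _ ≤ Hk * ((t - z * t) - (lam * t - z * (lam * t))) ^ γ₃ := h
        _ ≤ Hk * t ^ γ₃ := mul_le_mul_of_nonneg_left hpow hHk0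
    have key : k (lam * t - z * (lam * t)) * f (z * (lam * t)) - k (t - z * t) * f (z * t) =
        (k (lam * t - z * (lam * t)) * (f (z * (lam * t)) - f 0)
          - k (t - z * t) * (f (z * t) - f 0))
          + (k (lam * t - z * (lam * t)) - k (t - z * t)) * f 0 := by ring
    have e1 : |k (lam * t - z * (lam * t)) * (f (z * (lam * t)) - f 0)| ≤ K * (Hf * t ^ γ₄) := by
      rw [abs_mul]
      exact mul_le_mul hka1 hfb1 (abs_nonneg _) hK0
    have e2 : |k (t - z * t) * (f (z * t) - f 0)| ≤ K * (Hf * t ^ γ₄) := by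
      rw [abs_mul]
      exact mul_le_mul hka2 hfb2 (abs_nonneg _) hK0
    have e3 : |(k (lam * t - z * (lam * t)) - k (t - z * t)) * f 0| ≤ Hk * t ^ γ₃ * |f 0| := by
      rw [abs_mul]
      exact mul_le_mul_of_nonneg_right hkd (abs_nonneg _)
    rw [key]
    calc |(k (lam * t - z * (lam * t)) * (f (z * (lam * t)) - f 0)
          - k (t - z * t) * (f (z * t) - f 0))
          + (k (lam * t - z * (lam * t)) - k (t - z * t)) * f 0|
        ≤ |k (lam * t - z * (lam * t)) * (f (z * (lam * t)) - f 0)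
          - k (t - z * t) * (f (z * t) - f 0)|
          + |(k (lam * t - z * (lam * t)) - k (t - z * t)) * f 0| := abs_add_le _ _
      _ ≤ (|k (lam * t - z * (lam * t)) * (f (z * (lam * t)) - f 0)|
          + |k (t - z * t) * (f (z * t) - f 0)|)
          + |(k (lam * t - z * (lam * t)) - k (t - z * t)) * f 0| :=
          add_le_add_left (abs_sub _ _) _
      _ ≤ (K * (Hf * t ^ γ₄) + K * (Hf * t ^ γ₄)) + Hk * t ^ γ₃ * |f 0| :=
          add_le_add (add_le_add e1 e2) e3
      _ = M := by rw [hM]; ring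
  have h4 : (0:ℝ) ≤ t ^ γ₄ := Real.rpow_nonneg h0.le _
  have h3 : (0:ℝ) ≤ t ^ γ₃ := Real.rpow_nonneg h0.le _
  have hM0 : 0 ≤ M := by
    rw [hM]
    exact add_nonneg
      (mul_nonneg (mul_nonneg (by norm_num) (mul_nonneg hHf0 hK0)) h4)
      (mul_nonneg (abs_nonneg _) (mul_nonneg hHk0 h3))
  -- the difference of the two integrals
  have hlt0 : 0 ≤ lam * t := by positivity
  have hltT : lam * t ≤ Ts := by nlinarith
  have hGsub : Gbig γs k f (lam * t) - Gbig γs k f t =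
      ∫ z in (0:ℝ)..1,
        ((1 - z) ^ (γs - 1) * k (lam * t - z * (lam * t)) * f (z * (lam * t)) -
         (1 - z) ^ (γs - 1) * k (t - z * t) * f (z * t)) := by
    rw [Gbig, Gbig, ← intervalIntegral.integral_sub (hint (lam * t) hlt0 hltT)
      (hint t h0.le htT)]
  -- bound the integral
  have hgint : IntervalIntegrable (fun z : ℝ => (1 - z) ^ (γs - 1) * M) volume 0 1 :=
    hwint.mul_const M
  have hae : ∀ᵐ z ∂(volume.restrict (Set.uIoc (0:ℝ) 1)),
      ‖(1 - z) ^ (γs - 1) * k (lam * t - z * (lam * t)) * f (z * (lam * t)) -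
        (1 - z) ^ (γs - 1) * k (t - z * t) * f (z * t)‖ ≤ (1 - z) ^ (γs - 1) * M := by
    refine (ae_restrict_mem measurableSet_uIoc).mono fun z hz => ?_
    rw [Set.uIoc_of_le (by norm_num : (0:ℝ) ≤ 1)] at hz
    obtain ⟨hz0, hz1⟩ := hz
    have hw0 : (0:ℝ) ≤ (1 - z) ^ (γs - 1) := Real.rpow_nonneg (by linarith) _
    have hiden : (1 - z) ^ (γs - 1) * k (lam * t - z * (lam * t)) * f (z * (lam * t)) -
        (1 - z) ^ (γs - 1) * k (t - z * t) * f (z * t) =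
        (1 - z) ^ (γs - 1) *
          (k (lam * t - z * (lam * t)) * f (z * (lam * t)) - k (t - z * t) * f (z * t)) := by
      ring
    rw [Real.norm_eq_abs, hiden, abs_mul, abs_of_nonneg hw0]
    exact mul_le_mul_of_nonneg_left (inner z hz0.le hz1) hw0
  have hbound := intervalIntegral.norm_integral_le_abs_of_norm_le hae hgint
  rw [← hGsub] at hbound
  -- compute the majorant integral
  have hwval : (∫ z in (0:ℝ)..1, (1 - z) ^ (γs - 1)) = 1 / γs := by
    have h1 := intervalIntegral.integral_comp_sub_left (a := 0) (b := 1)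
      (fun x : ℝ => x ^ (γs - 1)) 1
    norm_num at h1
    rw [h1, integral_rpow (Or.inl (by linarith))]
    rw [sub_add_cancel, Real.one_rpow, Real.zero_rpow (ne_of_gt hγs0)]
    ring
  have hgval : (∫ z in (0:ℝ)..1, (1 - z) ^ (γs - 1) * M) = (1 / γs) * M := by
    rw [intervalIntegral.integral_mul_const, hwval]
  have habs : |Gbig γs k f (lam * t) - Gbig γs k f t| ≤ (1 / γs) * M := by
    have h := hbound
    rw [Real.norm_eq_abs] at h
    rw [hgval] at h
    have hnn : (0:ℝ) ≤ (1 / γs) * M := by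
      apply mul_nonneg _ hM0
      positivity
    rwa [abs_of_nonneg hnn] at h
  -- final comparison with the stated bound
  have hgm0 := gammaMin_pos
  have hgm1 := gammaMin_le_one
  have htm0 : (0:ℝ) ≤ t ^ m := Real.rpow_nonneg h0.le _
  have ht4 : t ^ γ₄ ≤ t ^ m :=
    Real.rpow_le_rpow_of_exponent_ge h0 ht1.le (min_le_right _ _)
  have ht3 : t ^ γ₃ ≤ t ^ m :=
    Real.rpow_le_rpow_of_exponent_ge h0 ht1.le (min_le_left _ _)
  have hMle : M ≤ 2 * t ^ m * (Hf * K + |f 0| * Hk) := by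
    have h1 : 2 * (Hf * K) * t ^ γ₄ ≤ 2 * (Hf * K) * t ^ m :=
      mul_le_mul_of_nonneg_left ht4 (by nlinarith [mul_nonneg hHf0 hK0])
    have h2a : |f 0| * (Hk * t ^ γ₃) ≤ |f 0| * (Hk * t ^ m) :=
      mul_le_mul_of_nonneg_left (mul_le_mul_of_nonneg_left ht3 hHk0) (abs_nonneg _)
    have hx : 0 ≤ |f 0| * (Hk * t ^ m) := mul_nonneg (abs_nonneg _) (mul_nonneg hHk0 htm0)
    rw [hM]
    nlinarith [h1, h2a, hx]
  have hfrac : (1:ℝ) / γs ≤ 1 / (γs * GammaMin) := by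
    apply one_div_le_one_div_of_le
    · positivity
    · nlinarith
  calc |Gbig γs k f (lam * t) - Gbig γs k f t| ≤ (1 / γs) * M := habs
    _ ≤ (1 / γs) * (2 * t ^ m * (Hf * K + |f 0| * Hk)) := by
        apply mul_le_mul_of_nonneg_left hMle
        positivity
    _ ≤ (1 / (γs * GammaMin)) * (2 * t ^ m * (Hf * K + |f 0| * Hk)) := by
        apply mul_le_mul_of_nonneg_right hfrac
        positivity
    _ = 2 * t ^ m / (γs * GammaMin) * (Hf * K + |f 0| * Hk) := by ring
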